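/- Let G be the intersection graph of closed real intervals I_1 = [l_1, r_1], …, I_n = [l_n, r_n] with l_i ≤ r_i (vertices i ≠ j adjacent iff I_i ∩ I_j ≠ ∅), where the vertices are ordered so that r_1 ≤ r_2 ≤ … ≤ r_n. Let U ⊆ {1, …, n}, let i be the largest element of U, and suppose U dominates the set {1, …, i} (every j with 1 ≤ j ≤ i either lies in U or is adjacent to some element of U). Then U dominates exactly the same vertices of G as the set {1, …, i} does; in particular, U is a dominating set of G if and only if {1, …, i} is. -/

import Mathlib

/-- The intersection graph of the closed intervals `[l i, r i]`, `i : Fin n`: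
distinct vertices are adjacent iff their intervals meet. -/
def intervalGraph (n : ℕ) (l r : Fin n → ℝ) : SimpleGraph (Fin n) where
  Adj i j := i ≠ j ∧ (Set.Icc (l i) (r i) ∩ Set.Icc (l j) (r j)).Nonempty
  symm := by
    constructor
    intro i j h
    exact ⟨h.1.symm, by rw [Set.inter_comm]; exact h.2⟩
  loopless := by
    constructor
    intro i h
    exact h.1 rfl

/-- `U` dominates the vertex `k` in `G`: `k ∈ U` or `k` is adjacent to a vertex of `U`. -/
def DominatesVertex {V : Type*} (G : SimpleGraph V) (U : Finset V) (k : V) : Prop :=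
  k ∈ U ∨ ∃ u ∈ U, G.Adj u k

/-- in an interval graph whose vertices are ordered non-decreasingly by
right endpoints, if `U` contains its maximum element `i` and dominates `{1, …, i}`, then
`U` dominates exactly the same vertices as the prefix `{1, …, i}`; in particular `U` is a
dominating set iff `{1, …, i}` is. -/
theorem prefix_dominating_same_vertices
    (n : ℕ) (l r : Fin n → ℝ) (hlr : ∀ i, l i ≤ r i) (hmono : Monotone r)
    (U : Finset (Fin n)) (hU : U.Nonempty) (i : Fin n) (hi : i = U.max' hU)
    (hdom : ∀ j : Fin n, j ≤ i → DominatesVertex (intervalGraph n l r) U j) :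
    (∀ k : Fin n, DominatesVertex (intervalGraph n l r) U k ↔
        DominatesVertex (intervalGraph n l r) (Finset.Iic i) k) ∧
      ((∀ k : Fin n, DominatesVertex (intervalGraph n l r) U k) ↔
        (∀ k : Fin n, DominatesVertex (intervalGraph n l r) (Finset.Iic i) k)) := by
  have hsub : ∀ u ∈ U, u ∈ Finset.Iic i := by
    intro u hu
    exact Finset.mem_Iic.mpr (hi ▸ Finset.le_max' U u hu)
  have hiU : i ∈ U := hi ▸ U.max'_mem hU
  have main : ∀ k : Fin n, DominatesVertex (intervalGraph n l r) U k ↔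
      DominatesVertex (intervalGraph n l r) (Finset.Iic i) k := by
    intro k
    constructor
    · rintro (hk | ⟨u, hu, hadj⟩)
      · exact Or.inl (hsub k hk)
      · exact Or.inr ⟨u, hsub u hu, hadj⟩
    · rintro (hk | ⟨j, hj, hne, x, ⟨hx1, hx2⟩, hx3, hx4⟩)
      · exact hdom k (Finset.mem_Iic.mp hk)
      · by_cases hki : k ≤ i
        · exact hdom k hki
        · push_neg at hki
          refine Or.inr ⟨i, hiU, Fin.ne_of_lt hki, r i, ⟨hlr i, le_refl _⟩, ?_, ?_⟩
          · exact le_trans hx3 (le_trans hx2 (hmono (Finset.mem_Iic.mp hj)))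
          · exact hmono hki.le
  exact ⟨main, forall_congr' main⟩
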